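/- Let k ≥ 1 be an integer, and suppose p₀, p₁, …, p_k, q₁, q₂ : ℝ → ℂ³ are differentiable functions satisfying at t = 0 the constraints ω(q₁,q₂) = 0, ω(p_k,q₂) = 0, and j·ω(p_j,q₁) + (j−1)·ω(p_{j−1},q₂) = 0 for 1 ≤ j ≤ k, and satisfying for all t ∈ ℝ the evolution equations dp₀/dt = 2 p₁×q₁, dp_k/dt = 2k p_k×q₂, dp_j/dt = 2(j+1) p_{j+1}×q₁ + 2j p_j×q₂ for 1 ≤ j ≤ k−1, dq₁/dt = −2 q₁×q₂ and dq₂/dt = 0. Define Φ : ℝ³ → ℂ³ by Φ(x,y,t) = p₀(t) + x·p₁(t) + x²·p₂(t) + ⋯ + x^k·p_k(t) + y·q₁(t) + xy·q₂(t). Then at every point of ℝ³, ω vanishes on each pair of partial derivatives of Φ and Im Ω(∂Φ/∂x, ∂Φ/∂y, ∂Φ/∂t) = 0; that is, N = Φ(ℝ³) is a special Lagrangian 3-fold in ℂ³ wherever it is nonsingular. -/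

import Mathlib

noncomputable section

open Complex ComplexConjugate

/-- ℂ³ as triples of complex numbers. -/
abbrev C3 := ℂ × ℂ × ℂ

/-- The standard Kähler form ω(u,v) = Σ Im(conj(u_j)·v_j). -/
def omega3 (u v : C3) : ℝ :=
  (conj u.1 * v.1).im + (conj u.2.1 * v.2.1).im + (conj u.2.2 * v.2.2).im

/-- The antibilinear cross product on ℂ³. -/
def cross3 (u v : C3) : C3 :=
  ((1/2 : ℂ) * conj (u.2.1 * v.2.2 - u.2.2 * v.2.1),
   (1/2 : ℂ) * conj (u.2.2 * v.1 - u.1 * v.2.2),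
   (1/2 : ℂ) * conj (u.1 * v.2.1 - u.2.1 * v.1))

/-- The holomorphic volume form Ω(u,v,w): determinant of the matrix with columns u,v,w. -/
def Omega3 (u v w : C3) : ℂ :=
  u.1 * (v.2.1 * w.2.2 - v.2.2 * w.2.1)
  - v.1 * (u.2.1 * w.2.2 - u.2.2 * w.2.1)
  + w.1 * (u.2.1 * v.2.2 - u.2.2 * v.2.1)

/-- The map Φ(x,y,t) = Σ_{j=0}^{k} x^j p_j(t) + y q₁(t) + xy q₂(t). -/
def Phi19 (k : ℕ) (p : ℕ → ℝ → C3) (q₁ q₂ : ℝ → C3) (x y t : ℝ) : C3 :=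
  (∑ j ∈ Finset.range (k + 1), (x ^ j) • p j t) + y • q₁ t + (x * y) • q₂ t

/-! ### Auxiliary algebraic lemmas -/

lemma omega3_antisymm (u v : C3) : omega3 v u = - omega3 u v := by
  simp [omega3, Complex.mul_im]; ring
lemma omega3_self (u : C3) : omega3 u u = 0 := by
  simp [omega3, Complex.mul_im]; ring
lemma omega3_add_left (u v w : C3) : omega3 (u+v) w = omega3 u w + omega3 v w := by
  simp [omega3, Complex.mul_im, Complex.add_re, Complex.add_im]; ring
lemma omega3_add_right (u v w : C3) : omega3 u (v+w) = omega3 u v + omega3 u w := by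
  simp [omega3, Complex.mul_im]; ring
lemma omega3_smul_left (r : ℝ) (u v : C3) : omega3 (r•u) v = r * omega3 u v := by
  simp [omega3, Complex.mul_im, Prod.smul_fst, Prod.smul_snd, Complex.real_smul]; ring
lemma omega3_smul_right (r : ℝ) (u v : C3) : omega3 u (r•v) = r * omega3 u v := by
  simp [omega3, Complex.mul_im, Prod.smul_fst, Prod.smul_snd, Complex.smul_re,
    Complex.smul_im]; ring
lemma omega3_cross (u v w : C3) : omega3 (cross3 u v) w = (Omega3 u v w).im / 2 := by
  simp [omega3, cross3, Omega3, Complex.mul_im, Complex.mul_re]; ring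
lemma Omega3_swap13 (u v w : C3) : Omega3 w v u = - Omega3 u v w := by
  simp [Omega3]; ring
lemma Omega3_self23 (u v : C3) : Omega3 u v v = 0 := by
  simp only [Omega3]; ring
lemma Omega3_self13 (u v : C3) : Omega3 u v u = 0 := by
  simp only [Omega3]; ring
lemma cross3_anticomm (u v : C3) : cross3 v u = - cross3 u v := by
  simp [cross3, Prod.ext_iff, map_sub, map_mul]
  refine ⟨by ring, by ring, by ring⟩
lemma cross3_self (u : C3) : cross3 u u = 0 := by
  simp [cross3, Prod.ext_iff]
  refine ⟨by ring, by ring, by ring⟩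
lemma cross3_add_left (u v w : C3) : cross3 (u+v) w = cross3 u w + cross3 v w := by
  simp [cross3, Prod.ext_iff, map_sub, map_mul, map_add]
  refine ⟨by ring, by ring, by ring⟩
lemma cross3_add_right (u v w : C3) : cross3 u (v+w) = cross3 u v + cross3 u w := by
  simp [cross3, Prod.ext_iff, map_sub, map_mul, map_add]
  refine ⟨by ring, by ring, by ring⟩
lemma cross3_smul_left (r : ℝ) (u v : C3) : cross3 (r•u) v = r • cross3 u v := by
  simp [cross3, Prod.ext_iff, map_sub, map_mul, Complex.real_smul, map_ofNat,
    Complex.conj_ofReal]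
  refine ⟨by ring, by ring, by ring⟩
lemma cross3_smul_right (r : ℝ) (u v : C3) : cross3 u (r•v) = r • cross3 u v := by
  simp [cross3, Prod.ext_iff, map_sub, map_mul, Complex.real_smul, map_ofNat,
    Complex.conj_ofReal]
  refine ⟨by ring, by ring, by ring⟩
lemma cross3_zero_left (v : C3) : cross3 0 v = 0 := by
  simp [cross3, Prod.ext_iff]
lemma omega3_zero_left (v : C3) : omega3 0 v = 0 := by
  simp [omega3]
lemma cross3_sum_left {ι : Type*} (s : Finset ι) (f : ι → C3) (v : C3) :
    cross3 (∑ i ∈ s, f i) v = ∑ i ∈ s, cross3 (f i) v := by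
  induction s using Finset.cons_induction with
  | empty => simp [cross3_zero_left]
  | cons a s ha ih => simp [Finset.sum_cons, cross3_add_left, ih]
lemma omega3_sum_left {ι : Type*} (s : Finset ι) (f : ι → C3) (v : C3) :
    omega3 (∑ i ∈ s, f i) v = ∑ i ∈ s, omega3 (f i) v := by
  induction s using Finset.cons_induction with
  | empty => simp [omega3_zero_left]
  | cons a s ha ih => simp [Finset.sum_cons, omega3_add_left, ih]

/-! ### Derivative lemmas -/

lemma HasDerivAt.fst' {t : ℝ} {E F : Type*} [NormedAddCommGroup E] [NormedSpace ℝ E]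
    [NormedAddCommGroup F] [NormedSpace ℝ F] {f : ℝ → E × F} {f' : E × F}
    (h : HasDerivAt f f' t) : HasDerivAt (fun s => (f s).1) f'.1 t := by
  simpa using h.hasFDerivAt.fst.hasDerivAt

lemma HasDerivAt.snd' {t : ℝ} {E F : Type*} [NormedAddCommGroup E] [NormedSpace ℝ E]
    [NormedAddCommGroup F] [NormedSpace ℝ F] {f : ℝ → E × F} {f' : E × F}
    (h : HasDerivAt f f' t) : HasDerivAt (fun s => (f s).2) f'.2 t := by
  simpa using h.hasFDerivAt.snd.hasDerivAt

lemma hasDerivAt_im {t : ℝ} {f : ℝ → ℂ} {f' : ℂ} (h : HasDerivAt f f' t) :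
    HasDerivAt (fun s => (f s).im) f'.im t :=
  (Complex.imCLM.hasFDerivAt.comp_hasDerivAt t h)

lemma hasDerivAt_omega {t : ℝ} {u v : ℝ → C3} {u' v' : C3}
    (hu : HasDerivAt u u' t) (hv : HasDerivAt v v' t) :
    HasDerivAt (fun s => omega3 (u s) (v s)) (omega3 u' (v t) + omega3 (u t) v') t := by
  have a1 : HasDerivAt (fun s => (u s).1) u'.1 t := hu.fst'
  have a2 : HasDerivAt (fun s => (u s).2.1) u'.2.1 t := hu.snd'.fst'
  have a3 : HasDerivAt (fun s => (u s).2.2) u'.2.2 t := hu.snd'.snd'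
  have b1 : HasDerivAt (fun s => (v s).1) v'.1 t := hv.fst'
  have b2 : HasDerivAt (fun s => (v s).2.1) v'.2.1 t := hv.snd'.fst'
  have b3 : HasDerivAt (fun s => (v s).2.2) v'.2.2 t := hv.snd'.snd'
  have h1 := hasDerivAt_im (a1.star.mul b1)
  have h2 := hasDerivAt_im (a2.star.mul b2)
  have h3 := hasDerivAt_im (a3.star.mul b3)
  have key := (h1.add h2).add h3
  simp only [Complex.star_def] at key
  unfold omega3
  refine key.congr_deriv ?_
  simp [Complex.add_im, Complex.mul_im]
  ring

lemma hasDerivAt_cross {t : ℝ} {u v : ℝ → C3} {u' v' : C3}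
    (hu : HasDerivAt u u' t) (hv : HasDerivAt v v' t) :
    HasDerivAt (fun s => cross3 (u s) (v s)) (cross3 u' (v t) + cross3 (u t) v') t := by
  have a1 : HasDerivAt (fun s => (u s).1) u'.1 t := hu.fst'
  have a2 : HasDerivAt (fun s => (u s).2.1) u'.2.1 t := hu.snd'.fst'
  have a3 : HasDerivAt (fun s => (u s).2.2) u'.2.2 t := hu.snd'.snd'
  have b1 : HasDerivAt (fun s => (v s).1) v'.1 t := hv.fst'
  have b2 : HasDerivAt (fun s => (v s).2.1) v'.2.1 t := hv.snd'.fst'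
  have b3 : HasDerivAt (fun s => (v s).2.2) v'.2.2 t := hv.snd'.snd'
  have h1 := (((a2.mul b3).sub (a3.mul b2)).star).const_mul ((1/2 : ℂ))
  have h2 := (((a3.mul b1).sub (a1.mul b3)).star).const_mul ((1/2 : ℂ))
  have h3 := (((a1.mul b2).sub (a2.mul b1)).star).const_mul ((1/2 : ℂ))
  have key := h1.prodMk (h2.prodMk h3)
  simp only [Complex.star_def] at key
  unfold cross3
  refine key.congr_deriv ?_
  simp [Prod.ext_iff, map_sub, map_add, map_mul]
  refine ⟨by ring, by ring, by ring⟩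

theorem statement_19
    (k : ℕ) (hk : 1 ≤ k)
    (p : ℕ → ℝ → C3) (q₁ q₂ : ℝ → C3)
    -- the constraints at t = 0
    (hc1 : omega3 (q₁ 0) (q₂ 0) = 0)
    (hc2 : omega3 (p k 0) (q₂ 0) = 0)
    (hc3 : ∀ j : ℕ, 1 ≤ j → j ≤ k →
      (j : ℝ) * omega3 (p j 0) (q₁ 0) + ((j : ℝ) - 1) * omega3 (p (j-1) 0) (q₂ 0) = 0)
    -- the evolution equations
    (hp0 : ∀ t : ℝ, HasDerivAt (p 0) ((2:ℝ) • cross3 (p 1 t) (q₁ t)) t)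
    (hpk : ∀ t : ℝ, HasDerivAt (p k) ((2 * (k : ℝ)) • cross3 (p k t) (q₂ t)) t)
    (hpj : ∀ j : ℕ, 1 ≤ j → j ≤ k - 1 → ∀ t : ℝ,
      HasDerivAt (p j)
        ((2 * ((j : ℝ) + 1)) • cross3 (p (j+1) t) (q₁ t)
          + (2 * (j : ℝ)) • cross3 (p j t) (q₂ t)) t)
    (hq1 : ∀ t : ℝ, HasDerivAt q₁ ((-2:ℝ) • cross3 (q₁ t) (q₂ t)) t)
    (hq2 : ∀ t : ℝ, HasDerivAt q₂ (0 : C3) t) :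
    ∀ x y t : ℝ,
      omega3 (deriv (fun s => Phi19 k p q₁ q₂ s y t) x)
             (deriv (fun s => Phi19 k p q₁ q₂ x s t) y) = 0 ∧
      omega3 (deriv (fun s => Phi19 k p q₁ q₂ s y t) x)
             (deriv (fun s => Phi19 k p q₁ q₂ x y s) t) = 0 ∧
      omega3 (deriv (fun s => Phi19 k p q₁ q₂ x s t) y)
             (deriv (fun s => Phi19 k p q₁ q₂ x y s) t) = 0 ∧
      (Omega3 (deriv (fun s => Phi19 k p q₁ q₂ s y t) x)
              (deriv (fun s => Phi19 k p q₁ q₂ x s t) y)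
              (deriv (fun s => Phi19 k p q₁ q₂ x y s) t)).im = 0 := by
  -- abbreviations for the partial derivatives
  set Dp : ℕ → ℝ → C3 := fun j t =>
    (if j = k then (0:C3) else (2*((j:ℝ)+1)) • cross3 (p (j+1) t) (q₁ t))
      + (2*(j:ℝ)) • cross3 (p j t) (q₂ t) with hDpdef
  set DX : ℝ → ℝ → ℝ → C3 := fun x y t =>
    (∑ j ∈ Finset.range (k+1), ((j:ℝ) * x^(j-1)) • p j t) + y • q₂ t with hDXdef
  set DY : ℝ → ℝ → C3 := fun x t => q₁ t + x • q₂ t with hDYdef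
  set DT : ℝ → ℝ → ℝ → C3 := fun x y t =>
    (∑ j ∈ Finset.range (k+1), x^j • Dp j t) + y • ((-2:ℝ) • cross3 (q₁ t) (q₂ t)) with hDTdef
  -- the derivatives of the p j
  have hDp : ∀ j : ℕ, j ≤ k → ∀ t : ℝ, HasDerivAt (p j) (Dp j t) t := by
    intro j hj t
    rcases eq_or_ne j k with hjk | hjk
    · subst hjk
      simp only [hDpdef]
      simpa using hpk t
    · rcases Nat.eq_zero_or_pos j with hj0 | hj0
      · subst hj0
        simp only [hDpdef, if_neg hjk, Nat.cast_zero, zero_add, mul_one, mul_zero,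
          zero_smul, add_zero]
        simpa using hp0 t
      · simp only [hDpdef, if_neg hjk]
        exact hpj j hj0 (by omega) t
  -- partial derivatives of Φ
  have hX : ∀ x y t : ℝ, HasDerivAt (fun s => Phi19 k p q₁ q₂ s y t) (DX x y t) x := by
    intro x y t
    have h1 : HasDerivAt (fun s : ℝ => ∑ j ∈ Finset.range (k+1), s^j • p j t)
        (∑ j ∈ Finset.range (k+1), ((j:ℝ) * x^(j-1)) • p j t) x := by
      apply HasDerivAt.fun_sum
      intro j _
      simpa using (hasDerivAt_pow j x).smul_const (p j t)
    have h2 := ((hasDerivAt_id x).mul_const y).smul_const (q₂ t)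
    rw [one_mul] at h2
    exact (h1.add_const (y • q₁ t)).add h2
  have hY : ∀ x y t : ℝ, HasDerivAt (fun s => Phi19 k p q₁ q₂ x s t) (DY x t) y := by
    intro x y t
    have h1 := (hasDerivAt_id y).smul_const (q₁ t)
    rw [one_smul] at h1
    have h2 := ((hasDerivAt_id y).const_mul x).smul_const (q₂ t)
    rw [mul_one] at h2
    have h0 := ((hasDerivAt_const y (∑ j ∈ Finset.range (k+1), x^j • p j t)).add h1).add h2
    rw [zero_add] at h0
    exact h0
  have hT : ∀ x y t : ℝ, HasDerivAt (fun s => Phi19 k p q₁ q₂ x y s) (DT x y t) t := by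
    intro x y t
    have h1 : HasDerivAt (fun s : ℝ => ∑ j ∈ Finset.range (k+1), x^j • p j s)
        (∑ j ∈ Finset.range (k+1), x^j • Dp j t) t := by
      apply HasDerivAt.fun_sum
      intro j hj
      exact (hDp j (by simpa [Nat.lt_succ_iff] using hj) t).const_smul (x^j)
    have h2 := (hq1 t).const_smul y
    have h3 := (hq2 t).const_smul (x*y)
    rw [smul_zero] at h3
    have h4 := (h1.add h2).add h3
    rw [add_zero] at h4
    exact h4
  -- the key algebraic identity  Φ_t = 2 Φ_x × Φ_y
  have hkey : ∀ x y t : ℝ, DT x y t = (2:ℝ) • cross3 (DX x y t) (DY x t) := by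
    intro x y t
    have hL : DT x y t
        = (∑ j ∈ Finset.range k, ((2*((j:ℝ)+1))*x^j) • cross3 (p (j+1) t) (q₁ t))
          + (∑ j ∈ Finset.range (k+1), ((2*(j:ℝ))*x^j) • cross3 (p j t) (q₂ t))
          + (-2*y) • cross3 (q₁ t) (q₂ t) := by
      simp only [hDTdef, hDpdef, smul_add, Finset.sum_add_distrib]
      congr 1
      congr 1
      · rw [Finset.sum_range_succ, if_pos rfl, smul_zero, add_zero]
        refine Finset.sum_congr rfl fun j hj => ?_
        rw [if_neg (Nat.ne_of_lt (Finset.mem_range.mp hj)), smul_smul, mul_comm]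
      · refine Finset.sum_congr rfl fun j hj => ?_
        rw [smul_smul, mul_comm]
      · rw [smul_smul, mul_comm]
    have e1 : cross3 (∑ j ∈ Finset.range (k+1), ((j:ℝ) * x^(j-1)) • p j t) (q₁ t)
        = ∑ j ∈ Finset.range (k+1), ((j:ℝ) * x^(j-1)) • cross3 (p j t) (q₁ t) := by
      rw [cross3_sum_left]
      exact Finset.sum_congr rfl fun j _ => cross3_smul_left _ _ _
    have e2 : cross3 (∑ j ∈ Finset.range (k+1), ((j:ℝ) * x^(j-1)) • p j t) (q₂ t)
        = ∑ j ∈ Finset.range (k+1), ((j:ℝ) * x^(j-1)) • cross3 (p j t) (q₂ t) := by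
      rw [cross3_sum_left]
      exact Finset.sum_congr rfl fun j _ => cross3_smul_left _ _ _
    have hR : (2:ℝ) • cross3 (DX x y t) (DY x t)
        = (∑ j ∈ Finset.range k, ((2*((j:ℝ)+1))*x^j) • cross3 (p (j+1) t) (q₁ t))
          + (∑ j ∈ Finset.range (k+1), ((2*(j:ℝ))*x^j) • cross3 (p j t) (q₂ t))
          + (-2*y) • cross3 (q₁ t) (q₂ t) := by
      have f1 : (2:ℝ) • (∑ j ∈ Finset.range (k+1), ((j:ℝ)*x^(j-1)) • cross3 (p j t) (q₁ t))
          = ∑ j ∈ Finset.range k, ((2*((j:ℝ)+1))*x^j) • cross3 (p (j+1) t) (q₁ t) := by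
        rw [Finset.smul_sum,
          Finset.sum_range_succ' (fun j => (2:ℝ) • (((j:ℝ) * x^(j-1)) • cross3 (p j t) (q₁ t))) k]
        simp only [Nat.cast_zero, zero_mul, zero_smul, smul_zero, add_zero, Nat.add_sub_cancel,
          Nat.cast_add, Nat.cast_one]
        exact Finset.sum_congr rfl fun j hj => by module
      have f2 : (2:ℝ) • (x • ∑ j ∈ Finset.range (k+1), ((j:ℝ)*x^(j-1)) • cross3 (p j t) (q₂ t))
          = ∑ j ∈ Finset.range (k+1), ((2*(j:ℝ))*x^j) • cross3 (p j t) (q₂ t) := by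
        rw [Finset.smul_sum, Finset.smul_sum]
        refine Finset.sum_congr rfl fun j hj => ?_
        rcases Nat.eq_zero_or_pos j with h0 | h0
        · subst h0; simp
        · have hx : x^j = x^(j-1) * x := by
            rw [← pow_succ]
            congr 1
            omega
          rw [hx]
          module
      have f3 : (2:ℝ) • (y • - cross3 (q₁ t) (q₂ t)) = (-2*y) • cross3 (q₁ t) (q₂ t) := by
        module
      simp only [hDXdef, hDYdef]
      rw [cross3_add_left, cross3_add_right, cross3_add_right, cross3_smul_right,
        cross3_smul_left, cross3_smul_left, cross3_smul_right, cross3_self, smul_zero,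
        smul_zero, add_zero, e1, e2, cross3_anticomm (q₁ t) (q₂ t)]
      rw [smul_add, smul_add, f1, f2, f3]
    rw [hL, hR]
  -- ω(Φ_x, Φ_y) is conserved in time
  have hconsv : ∀ x y t : ℝ, omega3 (DX x y t) (DY x t) = omega3 (DX x y 0) (DY x 0) := by
    intro x y t₀
    have hzero : ∀ t : ℝ, HasDerivAt (fun s => omega3 (DX x y s) (DY x s)) 0 t := by
      intro t
      -- derivative in t of DX
      have hDXt : HasDerivAt (fun s => DX x y s)
          (∑ j ∈ Finset.range (k+1), ((j:ℝ) * x^(j-1)) • Dp j t) t := by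
        have h1 : HasDerivAt (fun s : ℝ => ∑ j ∈ Finset.range (k+1), ((j:ℝ) * x^(j-1)) • p j s)
            (∑ j ∈ Finset.range (k+1), ((j:ℝ) * x^(j-1)) • Dp j t) t := by
          apply HasDerivAt.fun_sum
          intro j hj
          exact (hDp j (by simpa [Nat.lt_succ_iff] using hj) t).const_smul ((j:ℝ) * x^(j-1))
        have h2 := (hq2 t).const_smul y
        rw [smul_zero] at h2
        have h3 := h1.add h2
        rw [add_zero] at h3
        exact h3
      -- derivative in t of DY
      have hDYt : HasDerivAt (fun s => DY x s) ((-2:ℝ) • cross3 (q₁ t) (q₂ t)) t := by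
        have h2 := (hq2 t).const_smul x
        rw [smul_zero] at h2
        have h3 := (hq1 t).add h2
        rw [add_zero] at h3
        exact h3
      -- derivative in x of DX (existence, explicit value irrelevant)
      have hDXx : HasDerivAt (fun x' => DX x' y t)
          (∑ j ∈ Finset.range (k+1), ((j:ℝ) * ((((j-1:ℕ)):ℝ) * x^(j-1-1))) • p j t) x := by
        have h1 : HasDerivAt (fun x' : ℝ => ∑ j ∈ Finset.range (k+1), ((j:ℝ) * x'^(j-1)) • p j t)
            (∑ j ∈ Finset.range (k+1), ((j:ℝ) * ((((j-1:ℕ)):ℝ) * x^(j-1-1))) • p j t) x := by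
          apply HasDerivAt.fun_sum
          intro j hj
          exact (((hasDerivAt_pow (j-1) x).const_mul ((j:ℝ))).smul_const (p j t))
        exact h1.add_const _
      have hDYx : HasDerivAt (fun x' => DY x' t) (q₂ t) x := by
        have h1 := (hasDerivAt_id x).smul_const (q₂ t)
        rw [one_smul] at h1
        exact h1.const_add (q₁ t)
      -- derivative in x of DT, directly
      have hG1 : HasDerivAt (fun x' => DT x' y t)
          (∑ j ∈ Finset.range (k+1), ((j:ℝ) * x^(j-1)) • Dp j t) x := by
        have h1 : HasDerivAt (fun x' : ℝ => ∑ j ∈ Finset.range (k+1), x'^j • Dp j t)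
            (∑ j ∈ Finset.range (k+1), ((j:ℝ) * x^(j-1)) • Dp j t) x := by
          apply HasDerivAt.fun_sum
          intro j hj
          simpa using (hasDerivAt_pow j x).smul_const (Dp j t)
        exact h1.add_const _
      -- derivative in x of DT via the key identity
      have hG2 : HasDerivAt (fun x' => DT x' y t)
          ((2:ℝ) • (cross3 (∑ j ∈ Finset.range (k+1),
              ((j:ℝ) * ((((j-1:ℕ)):ℝ) * x^(j-1-1))) • p j t) (DY x t)
            + cross3 (DX x y t) (q₂ t))) x := by
        have hc := (hasDerivAt_cross hDXx hDYx).const_smul (2:ℝ)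
        have hfun : (fun x' => DT x' y t) = (fun x' => (2:ℝ) • cross3 (DX x' y t) (DY x' t)) :=
          funext fun x' => hkey x' y t
        rw [hfun]
        exact hc
      have huniq := hG1.unique hG2
      have hF := hasDerivAt_omega hDXt hDYt
      rw [huniq] at hF
      -- now show the derivative value vanishes
      have hval : omega3 ((2:ℝ) • (cross3 (∑ j ∈ Finset.range (k+1),
              ((j:ℝ) * ((((j-1:ℕ)):ℝ) * x^(j-1-1))) • p j t) (DY x t)
            + cross3 (DX x y t) (q₂ t))) (DY x t)
          + omega3 (DX x y t) ((-2:ℝ) • cross3 (q₁ t) (q₂ t)) = 0 := by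
        have hq12 : cross3 (q₁ t) (q₂ t) = cross3 (DY x t) (q₂ t) := by
          simp only [hDYdef]
          rw [cross3_add_left, cross3_smul_left, cross3_self, smul_zero, add_zero]
        rw [omega3_smul_left, omega3_add_left, omega3_cross, omega3_cross, Omega3_self23,
          hq12, omega3_smul_right]
        have h1 : omega3 (DX x y t) (cross3 (DY x t) (q₂ t))
            = - omega3 (cross3 (DY x t) (q₂ t)) (DX x y t) := by
          rw [omega3_antisymm]
        rw [h1, omega3_cross, Omega3_swap13 (DX x y t) (q₂ t) (DY x t)]
        simp
        ring
      rw [hval] at hF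
      exact hF
    exact is_const_of_deriv_eq_zero
      (fun s => (hzero s).differentiableAt) (fun s => (hzero s).deriv) t₀ 0
  -- ω(Φ_x, Φ_y) vanishes at time 0
  have hF0 : ∀ x y : ℝ, omega3 (DX x y 0) (DY x 0) = 0 := by
    intro x y
    have hq21 : omega3 (q₂ 0) (q₁ 0) = 0 := by
      rw [omega3_antisymm (q₁ 0) (q₂ 0), hc1, neg_zero]
    have eS1 : omega3 (∑ j ∈ Finset.range (k+1), ((j:ℝ) * x^(j-1)) • p j 0) (q₁ 0)
        = ∑ j ∈ Finset.range (k+1), ((j:ℝ) * x^(j-1)) * omega3 (p j 0) (q₁ 0) := by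
      rw [omega3_sum_left]
      exact Finset.sum_congr rfl fun j _ => omega3_smul_left _ _ _
    have eS2 : omega3 (∑ j ∈ Finset.range (k+1), ((j:ℝ) * x^(j-1)) • p j 0) (q₂ 0)
        = ∑ j ∈ Finset.range (k+1), ((j:ℝ) * x^(j-1)) * omega3 (p j 0) (q₂ 0) := by
      rw [omega3_sum_left]
      exact Finset.sum_congr rfl fun j _ => omega3_smul_left _ _ _
    simp only [hDXdef, hDYdef]
    rw [omega3_add_left, omega3_add_right, omega3_add_right, omega3_smul_right,
      omega3_smul_left, omega3_smul_left, omega3_smul_right, omega3_self, hq21,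
      eS1, eS2]
    rw [Finset.mul_sum]
    have eA : ∑ j ∈ Finset.range (k+1), ((j:ℝ) * x^(j-1)) * omega3 (p j 0) (q₁ 0)
        = ∑ j ∈ Finset.range k, (((j:ℝ)+1) * x^j) * omega3 (p (j+1) 0) (q₁ 0) := by
      rw [Finset.sum_range_succ' (fun j => ((j:ℝ) * x^(j-1)) * omega3 (p j 0) (q₁ 0)) k]
      simp only [Nat.cast_zero, zero_mul, add_zero, Nat.add_sub_cancel, Nat.cast_add,
        Nat.cast_one]
    have eB : ∑ j ∈ Finset.range (k+1), x * (((j:ℝ) * x^(j-1)) * omega3 (p j 0) (q₂ 0))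
        = ∑ j ∈ Finset.range k, ((j:ℝ) * x^j) * omega3 (p j 0) (q₂ 0) := by
      rw [Finset.sum_range_succ]
      have hbk : x * (((k:ℝ) * x^(k-1)) * omega3 (p k 0) (q₂ 0)) = 0 := by
        rw [hc2]; ring
      rw [hbk, add_zero]
      refine Finset.sum_congr rfl fun j hj => ?_
      rcases Nat.eq_zero_or_pos j with h0 | h0
      · subst h0; simp
      · have hx : x^j = x^(j-1) * x := by
          rw [← pow_succ]
          congr 1
          omega
        rw [hx]
        ring
    rw [eA, eB, ← Finset.sum_add_distrib]
    have : ∀ j ∈ Finset.range k,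
        (((j:ℝ)+1) * x^j) * omega3 (p (j+1) 0) (q₁ 0)
          + ((j:ℝ) * x^j) * omega3 (p j 0) (q₂ 0) = 0 := by
      intro j hj
      have h3 := hc3 (j+1) (by omega) (by have := Finset.mem_range.mp hj; omega)
      simp only [Nat.add_sub_cancel, Nat.cast_add, Nat.cast_one, add_sub_cancel_right] at h3
      linear_combination x^j * h3
    rw [Finset.sum_eq_zero this]
    ring
  intro x y t
  rw [(hX x y t).deriv, (hY x y t).deriv, (hT x y t).deriv, hkey x y t]
  refine ⟨(hconsv x y t).trans (hF0 x y), ?_, ?_, ?_⟩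
  · rw [omega3_smul_right]
    have h := omega3_antisymm (cross3 (DX x y t) (DY x t)) (DX x y t)
    rw [omega3_cross, Omega3_self13] at h
    simp at h
    rw [h]; ring
  · rw [omega3_smul_right]
    have h := omega3_antisymm (cross3 (DX x y t) (DY x t)) (DY x t)
    rw [omega3_cross, Omega3_self23] at h
    simp at h
    rw [h]; ring
  · have h := omega3_cross (DX x y t) (DY x t) ((2:ℝ) • cross3 (DX x y t) (DY x t))
    rw [omega3_smul_right, omega3_self] at h
    linarith [h]
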